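/- Let $f : [a,b] \to \mathbb{R}$ be differentiable with $|f'(t)| \le M$ for all $t \in (a,b)$. Then for any $p \in (a,b)$, $\left| f(p) - \frac{1}{b-a}\int_a^b f(t)\,dt \right| \le \frac{(p-a)^2 + (b-p)^2}{2(b-a)} M$. -/

import Mathlib

open MeasureTheory intervalIntegral

theorem ostrowski_classical (a b M : ℝ) (f f' : ℝ → ℝ)
    (hab : a < b) (hM : 0 ≤ M)
    (hderiv : ∀ t ∈ Set.Icc a b, HasDerivAt f (f' t) t)
    (hbound : ∀ t ∈ Set.Ioo a b, |f' t| ≤ M) :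
    ∀ p ∈ Set.Ioo a b,
      |f p - (1 / (b - a)) * ∫ t in a..b, f t| ≤
        ((p - a) ^ 2 + (b - p) ^ 2) / (2 * (b - a)) * M := by
  intro p hp
  obtain ⟨hap, hpb⟩ := hp
  have hba : (0:ℝ) < b - a := by linarith
  have hcont : ContinuousOn f (Set.Icc a b) := fun t ht =>
    (hderiv t ht).continuousAt.continuousWithinAt
  have hfint : IntervalIntegrable f volume a b :=
    hcont.intervalIntegrable_of_Icc hab.le
  have lip : ∀ t ∈ Set.Ioo a b, |f p - f t| ≤ M * |p - t| := by
    intro t ht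
    have := Convex.norm_image_sub_le_of_norm_hasDerivWithin_le
      (f := f) (f' := f') (C := M) (s := Set.Ioo a b)
      (fun x hx => (hderiv x (Set.Ioo_subset_Icc_self hx)).hasDerivWithinAt)
      (fun x hx => hbound x hx) (convex_Ioo a b) ht ⟨hap, hpb⟩
    simpa [Real.norm_eq_abs] using this
  -- integrability of the two absolute-value functions
  have h1int : IntervalIntegrable (fun t => |f p - f t|) volume a b :=
    ContinuousOn.intervalIntegrable_of_Icc hab.le (continuousOn_const.sub hcont).abs
  have h2int : IntervalIntegrable (fun t => M * |p - t|) volume a b := by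
    apply Continuous.intervalIntegrable
    exact continuous_const.mul (continuous_const.sub continuous_id).abs
  have hae : (fun t => |f p - f t|) ≤ᵐ[volume.restrict (Set.Icc a b)]
      fun t => M * |p - t| := by
    have h2 : ∀ᵐ t ∂(volume.restrict (Set.Icc a b)), t ∉ ({a, b} : Set ℝ) := by
      refine Filter.Eventually.filter_mono (ae_mono Measure.restrict_le_self) ?_
      exact measure_eq_zero_iff_ae_notMem.mp (((Set.finite_singleton b).insert a).measure_zero volume)
    filter_upwards [ae_restrict_mem measurableSet_Icc, h2] with t ht hnot
    simp only [Set.mem_insert_iff, Set.mem_singleton_iff, not_or] at hnot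
    exact lip t ⟨ht.1.lt_of_ne' hnot.1, ht.2.lt_of_ne hnot.2⟩
  have hmono : (∫ t in a..b, |f p - f t|) ≤ ∫ t in a..b, M * |p - t| :=
    integral_mono_ae_restrict hab.le h1int h2int hae
  have hval : (∫ t in a..b, M * |p - t|) = M * (((p-a)^2 + (b-p)^2)/2) := by
    rw [intervalIntegral.integral_const_mul]
    congr 1
    have hsplit : (∫ t in a..p, |p - t|) + ∫ t in p..b, |p - t| = ∫ t in a..b, |p - t| := by
      apply intervalIntegral.integral_add_adjacent_intervals <;>
        exact (Continuous.intervalIntegrable (by continuity) _ _)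
    have e1 : (∫ t in a..p, |p - t|) = (p - a)^2/2 := by
      rw [intervalIntegral.integral_congr (g := fun t => p - t) (fun t ht => ?_)]
      · rw [intervalIntegral.integral_sub intervalIntegrable_const intervalIntegrable_id]
        simp [integral_id]; ring
      · rw [Set.uIcc_of_le hap.le] at ht
        exact abs_of_nonneg (by linarith [ht.2])
    have e2 : (∫ t in p..b, |p - t|) = (b - p)^2/2 := by
      rw [intervalIntegral.integral_congr (g := fun t => t - p) (fun t ht => ?_)]
      · rw [intervalIntegral.integral_sub intervalIntegrable_id intervalIntegrable_const]
        simp [integral_id]; ring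
      · rw [Set.uIcc_of_le hpb.le] at ht
        rw [abs_sub_comm]
        exact abs_of_nonneg (by linarith [ht.1])
    rw [← hsplit, e1, e2]; ring
  have key : |f p * (b - a) - ∫ t in a..b, f t| ≤ M * (((p-a)^2 + (b-p)^2)/2) := by
    have heq : f p * (b - a) - (∫ t in a..b, f t) = ∫ t in a..b, (f p - f t) := by
      rw [intervalIntegral.integral_sub intervalIntegrable_const hfint,
        intervalIntegral.integral_const]
      simp [smul_eq_mul]; ring
    rw [heq]
    calc |∫ t in a..b, (f p - f t)| ≤ ∫ t in a..b, |f p - f t| :=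
          intervalIntegral.abs_integral_le_integral_abs hab.le
      _ ≤ ∫ t in a..b, M * |p - t| := hmono
      _ = M * (((p-a)^2 + (b-p)^2)/2) := hval
  have hrw : f p - (1 / (b - a)) * (∫ t in a..b, f t)
      = (f p * (b - a) - ∫ t in a..b, f t) / (b - a) := by
    field_simp
  rw [hrw, abs_div, abs_of_pos hba]
  rw [div_le_iff₀ hba]
  calc |f p * (b - a) - ∫ t in a..b, f t| ≤ M * (((p-a)^2 + (b-p)^2)/2) := key
    _ = ((p - a) ^ 2 + (b - p) ^ 2) / (2 * (b - a)) * M * (b - a) := by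
        field_simp
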